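/- Let ℓ ≥ 1, p > 1, and let (β_{ij}) be a symmetric ℓ×ℓ real matrix with β_{ii} > 0 and β_{ij} ≥ 0 for all i ≠ j. Define J(c) = (1/2)|c|² − (1/(2p)) Σ_{i,j} β_{ij} |c_i|^p |c_j|^p and M = {c ∈ ℝ^ℓ : c ≠ 0, |c|² = Σ_{i,j} β_{ij} |c_i|^p |c_j|^p}. Then M is nonempty and the infimum of J over M is attained at some point of M. -/

import Mathlib

open Finset

set_option maxHeartbeats 1000000 in
lemma nehari_aux (l : ℕ) (hl : 1 ≤ l) (p : ℝ) (hp : 1 < p)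
    (β : Fin l → Fin l → ℝ)
    (hdiag : ∀ i, 0 < β i i)
    (hoff : ∀ i j, i ≠ j → 0 ≤ β i j) :
    ∃ c : Fin l → ℝ,
      (c ≠ 0 ∧ ∑ i, (c i) ^ 2 = ∑ i, ∑ j, β i j * |c i| ^ p * |c j| ^ p) ∧
      ∀ c' : Fin l → ℝ, c' ≠ 0 →
        ∑ i, (c' i) ^ 2 = ∑ i, ∑ j, β i j * |c' i| ^ p * |c' j| ^ p →
        ∑ i, (c i) ^ 2 ≤ ∑ i, (c' i) ^ 2 := by
  have hp0 : (0:ℝ) < p := by linarith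
  have hβ : ∀ i j, 0 ≤ β i j := by
    intro i j
    by_cases h : i = j
    · subst h; exact (hdiag i).le
    · exact hoff i j h
  set N : (Fin l → ℝ) → ℝ := fun c => ∑ i, (c i) ^ 2 with hNdef
  set Q : (Fin l → ℝ) → ℝ := fun c => ∑ i, ∑ j, β i j * |c i| ^ p * |c j| ^ p with hQdef
  have hNcont : Continuous N := by
    apply continuous_finset_sum
    intro i _
    exact (continuous_apply i).pow 2
  have hQcont : Continuous Q := by
    apply continuous_finset_sum
    intro i _
    apply continuous_finset_sum
    intro j _
    exact (continuous_const.mul (((continuous_apply i).abs).rpow_const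
      (fun _ => Or.inr hp0.le))).mul (((continuous_apply j).abs).rpow_const
      (fun _ => Or.inr hp0.le))
  have hNpos : ∀ c : Fin l → ℝ, c ≠ 0 → 0 < N c := by
    intro c hc
    obtain ⟨i, hi⟩ : ∃ i, c i ≠ 0 := by
      by_contra h
      push_neg at h
      exact hc (funext h)
    have h1 : (c i)^2 ≤ N c :=
      Finset.single_le_sum (fun j _ => sq_nonneg (c j)) (Finset.mem_univ i)
    have := pow_pos (abs_pos.mpr hi) 2
    rw [sq_abs] at this
    linarith
  -- the witness point
  set i₀ : Fin l := ⟨0, hl⟩ with hi₀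
  set b : ℝ := β i₀ i₀ with hb_def
  have hb : 0 < b := hdiag i₀
  set r : ℝ := 1/(2 - 2*p) with hr_def
  set t : ℝ := b ^ r with ht_def
  have ht : 0 < t := Real.rpow_pos_of_pos hb r
  set c₀ : Fin l → ℝ := fun j => if j = i₀ then t else 0 with hc₀def
  have hc₀ne : c₀ ≠ 0 := by
    intro h
    have := congrFun h i₀
    simp [c₀] at this
    exact ht.ne' this
  have hNc₀ : N c₀ = t^2 := by
    simp only [hNdef]
    rw [Finset.sum_eq_single i₀]
    · simp [c₀]
    · intro j _ hj; simp [c₀, hj]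
    · simp
  have hQc₀ : Q c₀ = b * (t ^ p * t ^ p) := by
    rw [hQdef]
    simp only
    rw [Finset.sum_eq_single i₀]
    · rw [Finset.sum_eq_single i₀]
      · simp [c₀, abs_of_pos ht, mul_assoc]; exact Or.inl rfl
      · intro j _ hj
        simp [c₀, hj, Real.zero_rpow hp0.ne']
      · simp
    · intro i _ hi
      apply Finset.sum_eq_zero
      intro j _
      simp [c₀, hi, Real.zero_rpow hp0.ne']
    · simp
  have hMc₀ : N c₀ = Q c₀ := by
    rw [hNc₀, hQc₀]
    have h2 : (2:ℝ) - 2*p ≠ 0 := by nlinarith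
    have hre : r * 2 = 1 + (r * p + r * p) := by
      rw [hr_def]; have h3 : (1:ℝ) - p ≠ 0 := (by linarith : (1:ℝ) - p < 0).ne; field_simp; ring
    calc t^2 = t ^ (2:ℝ) := by rw [Real.rpow_two]
      _ = b ^ (r * 2) := by rw [ht_def, ← Real.rpow_mul hb.le]
      _ = b ^ (1 + (r * p + r * p)) := by rw [hre]
      _ = b * (t ^ p * t ^ p) := by
          rw [Real.rpow_add hb, Real.rpow_add hb, Real.rpow_one, ht_def,
            ← Real.rpow_mul hb.le]
  -- lower bound δ on M
  set B : ℝ := 1 + ∑ i, ∑ j, β i j with hBdef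
  have hB1 : (1:ℝ) ≤ B := by
    rw [hBdef]
    have : (0:ℝ) ≤ ∑ i, ∑ j, β i j :=
      Finset.sum_nonneg fun i _ => Finset.sum_nonneg fun j _ => hβ i j
    linarith
  have hβB : ∀ i j, β i j ≤ B := by
    intro i j
    have h1 : β i j ≤ ∑ j', β i j' :=
      Finset.single_le_sum (fun j' _ => hβ i j') (Finset.mem_univ j)
    have h2 : ∑ j', β i j' ≤ ∑ i', ∑ j', β i' j' :=
      Finset.single_le_sum (fun i' _ => Finset.sum_nonneg fun j' _ => hβ i' j')
        (Finset.mem_univ i)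
    linarith
  set C : ℝ := (l:ℝ)^2 * B with hCdef
  have hC : 0 < C := by
    have hl' : (0:ℝ) < (l:ℝ) := by exact_mod_cast hl.trans_lt' Nat.zero_lt_one  -- fix later
    positivity
  set δ : ℝ := (1/C) ^ (1/(p-1)) with hδdef
  have hδpos : 0 < δ := Real.rpow_pos_of_pos (by positivity) _
  have hδ : ∀ c : Fin l → ℝ, c ≠ 0 → N c = Q c → δ ≤ N c := by
    intro c hc hM
    have hn : 0 < N c := hNpos c hc
    have habs : ∀ i : Fin l, |c i| ^ p ≤ (N c) ^ (p/2) := by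
      intro i
      have h1 : (c i)^2 ≤ N c :=
        Finset.single_le_sum (fun j _ => sq_nonneg (c j)) (Finset.mem_univ i)
      have h2 : |c i| ^ p = ((c i)^2) ^ (p/2) := by
        rw [← sq_abs, ← Real.rpow_natCast |c i| 2, ← Real.rpow_mul (abs_nonneg _)]
        congr 1
        push_cast
        ring
      rw [h2]
      exact Real.rpow_le_rpow (sq_nonneg _) h1 (by positivity)
    have hQle : Q c ≤ C * (N c) ^ p := by
      have hterm : ∀ i j : Fin l, β i j * |c i| ^ p * |c j| ^ p ≤ B * (N c) ^ p := by
        intro i j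
        have h3 : (N c) ^ (p/2) * (N c) ^ (p/2) = (N c) ^ p := by
          rw [← Real.rpow_add hn]; norm_num
        have h4 : |c i| ^ p * |c j| ^ p ≤ (N c) ^ p := by
          rw [← h3]
          exact mul_le_mul (habs i) (habs j) (Real.rpow_nonneg (abs_nonneg _) _)
            (Real.rpow_nonneg hn.le _)
        have h5 : 0 ≤ |c i| ^ p * |c j| ^ p := by positivity
        calc β i j * |c i| ^ p * |c j| ^ p = β i j * (|c i| ^ p * |c j| ^ p) := by ring
          _ ≤ B * ((N c) ^ p) := mul_le_mul (hβB i j) h4 h5 (by linarith)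
      calc Q c ≤ ∑ i : Fin l, ∑ j : Fin l, B * (N c) ^ p :=
            Finset.sum_le_sum fun i _ => Finset.sum_le_sum fun j _ => hterm i j
        _ = C * (N c) ^ p := by
            simp [Finset.sum_const, hCdef]
            ring
    have hkey : 1 ≤ C * (N c) ^ (p-1) := by
      have h6 : N c ≤ C * (N c) ^ p := hM.trans_le hQle
      have h7 : (N c) ^ p = (N c) ^ (p-1) * N c := by
        rw [← Real.rpow_add_one hn.ne']; ring_nf
      rw [h7, ← mul_assoc] at h6
      nlinarith [mul_pos hC (Real.rpow_pos_of_pos hn (p-1))]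
    have h8 : 1/C ≤ (N c) ^ (p-1) := by
      rw [div_le_iff₀ hC]
      linarith [hkey]
    calc δ = (1/C) ^ (1/(p-1)) := rfl
      _ ≤ ((N c) ^ (p-1)) ^ (1/(p-1)) :=
          Real.rpow_le_rpow (by positivity) h8 (one_div_nonneg.mpr (by linarith))
      _ = N c := by
          rw [← Real.rpow_mul hn.le, mul_one_div, div_self (by linarith : p - 1 ≠ 0),
            Real.rpow_one]
  -- compact sublevel set
  set K : Set (Fin l → ℝ) := {c | N c = Q c} ∩ {c | δ ≤ N c ∧ N c ≤ N c₀} with hKdef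
  have hc₀K : c₀ ∈ K := ⟨hMc₀, hδ c₀ hc₀ne hMc₀, le_refl _⟩
  have hKclosed : IsClosed K := by
    apply IsClosed.inter
    · exact isClosed_eq hNcont hQcont
    · exact IsClosed.inter (isClosed_le continuous_const hNcont)
        (isClosed_le hNcont continuous_const)
  have hKcompact : IsCompact K := by
    apply Metric.isCompact_of_isClosed_isBounded hKclosed
    rw [Metric.isBounded_iff_subset_closedBall 0]
    refine ⟨Real.sqrt (N c₀), fun c hc => ?_⟩
    rw [Metric.mem_closedBall, dist_zero_right]
    rw [pi_norm_le_iff_of_nonneg (Real.sqrt_nonneg _)]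
    intro i
    have h1 : (c i)^2 ≤ N c :=
      Finset.single_le_sum (fun j _ => sq_nonneg (c j)) (Finset.mem_univ i)
    have h2 : N c ≤ N c₀ := hc.2.2
    have h3 := Real.sq_sqrt (by nlinarith [sq_nonneg (c i)] : (0:ℝ) ≤ N c₀)
    have h4 := Real.sqrt_nonneg (N c₀)
    rw [Real.norm_eq_abs]
    nlinarith [sq_abs (c i), abs_nonneg (c i)]
  obtain ⟨c, hcK, hcmin⟩ := hKcompact.exists_isMinOn ⟨c₀, hc₀K⟩ (hNcont.continuousOn)
  refine ⟨c, ⟨?_, hcK.1⟩, ?_⟩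
  · intro h
    have : N c = 0 := by
      rw [h, hNdef]
      simp only [Pi.zero_apply]
      simp
    have := hcK.2.1
    linarith [hδpos]
  · intro c' hc' hM'
    by_cases h : N c' ≤ N c₀
    · exact hcmin ⟨hM', hδ c' hc' hM', h⟩
    · have h1 : N c ≤ N c₀ := hcmin hc₀K
      linarith

/-- The purely cooperative algebraic Nehari set `M` is nonempty and the infimum of `J`
over `M` is attained. -/
theorem stmt1 (l : ℕ) (hl : 1 ≤ l) (p : ℝ) (hp : 1 < p)
    (β : Fin l → Fin l → ℝ)
    (hsym : ∀ i j, β i j = β j i)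
    (hdiag : ∀ i, 0 < β i i)
    (hoff : ∀ i j, i ≠ j → 0 ≤ β i j) :
    ∃ c : Fin l → ℝ,
      (c ≠ 0 ∧ ∑ i, (c i) ^ 2 = ∑ i, ∑ j, β i j * |c i| ^ p * |c j| ^ p) ∧
      ∀ c' : Fin l → ℝ, c' ≠ 0 →
        ∑ i, (c' i) ^ 2 = ∑ i, ∑ j, β i j * |c' i| ^ p * |c' j| ^ p →
        (1/2) * ∑ i, (c i) ^ 2
            - (1/(2*p)) * ∑ i, ∑ j, β i j * |c i| ^ p * |c j| ^ p
          ≤ (1/2) * ∑ i, (c' i) ^ 2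
            - (1/(2*p)) * ∑ i, ∑ j, β i j * |c' i| ^ p * |c' j| ^ p := by
  obtain ⟨c, ⟨hcne, hcM⟩, hcmin⟩ := nehari_aux l hl p hp β hdiag hoff
  refine ⟨c, ⟨hcne, hcM⟩, ?_⟩
  intro c' hc' hM'
  have hle := hcmin c' hc' hM'
  rw [← hcM, ← hM']
  have hp0 : (0:ℝ) < p := by linarith
  have hcoef : 1/(2*p) ≤ 1/2 := by
    rw [div_le_div_iff₀ (by linarith) (by norm_num)]
    linarith
  have hcoef0 : 0 ≤ 1/(2*p) := by positivity
  nlinarith [mul_le_mul_of_nonneg_left hle (by linarith : (0:ℝ) ≤ 1/2 - 1/(2*p))]
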